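/- Assume X_{i,j} = P_{i,j} = 0 whenever dist(i,j) > R. For all i, j ∈ L and all t ∈ ℝ, writing b_{i,j} = ⌈d_{i,j}/2⌉, both |C^{xp}_{i,j}(t)| and |C^{px}_{i,j}(t)| are bounded above by τ^{2b_{i,j}} · cosh(τ)/(2b_{i,j})!. -/

import Mathlib

/-- The ℓ²→ℓ² operator norm of a real matrix. -/
noncomputable def l2OpNorm {V : Type*} [Fintype V] [DecidableEq V] (M : Matrix V V ℝ) : ℝ :=
  ‖Matrix.toEuclideanCLM (𝕜 := ℝ) M‖

/-- `C^{xp}_{i,j}(t) = −∑_{n≥0} (−1)^n t^{2n} ((PX)^n)_{i,j}/(2n)!`,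
which equals `i[x̂_i(t), p̂_j]` for the harmonic Hamiltonian. -/
noncomputable def Cxp {V : Type*} [Fintype V] [DecidableEq V]
    (X P : Matrix V V ℝ) (i j : V) (t : ℝ) : ℝ :=
  -∑' n : ℕ, (-1 : ℝ) ^ n * t ^ (2 * n) * (((P * X) ^ n) i j) / (Nat.factorial (2 * n))

/-- `C^{px}_{i,j}(t) = ∑_{n≥0} (−1)^n t^{2n} ((XP)^n)_{i,j}/(2n)!`,
which equals `i[p̂_i(t), x̂_j]` for the harmonic Hamiltonian. -/
noncomputable def Cpx {V : Type*} [Fintype V] [DecidableEq V]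
    (X P : Matrix V V ℝ) (i j : V) (t : ℝ) : ℝ :=
  ∑' n : ℕ, (-1 : ℝ) ^ n * t ^ (2 * n) * (((X * P) ^ n) i j) / (Nat.factorial (2 * n))

lemma entry_abs_le_l2OpNorm {V : Type*} [Fintype V] [DecidableEq V] (M : Matrix V V ℝ)
    (i j : V) : |M i j| ≤ l2OpNorm M := by
  classical
  set f := Matrix.toEuclideanCLM (𝕜 := ℝ) M with hf
  set v : EuclideanSpace ℝ V := EuclideanSpace.single j 1 with hvdef
  have hv : ‖v‖ = 1 := by
    rw [hvdef, EuclideanSpace.norm_single, norm_one]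
  have hfv : f v = (WithLp.equiv 2 (V → ℝ)).symm (fun k => M k j) := by
    rw [hvdef, EuclideanSpace.single]
    rw [hf, Matrix.toEuclideanCLM_toLp]
    congr 1
    funext k
    simp
  have hcoord : |M i j| ≤ ‖f v‖ := by
    rw [hfv, EuclideanSpace.norm_eq]
    have h1 : |M i j| = Real.sqrt (|M i j| ^ 2) := (Real.sqrt_sq (abs_nonneg _)).symm
    rw [h1]
    apply Real.sqrt_le_sqrt
    have h2 : |M i j| ^ 2 = ‖((WithLp.equiv 2 (V → ℝ)).symm (fun k => M k j) : EuclideanSpace ℝ V) i‖ ^ 2 := by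
      simp [Real.norm_eq_abs]
    rw [h2]
    exact Finset.single_le_sum
      (f := fun k => ‖((WithLp.equiv 2 (V → ℝ)).symm (fun k => M k j) : EuclideanSpace ℝ V) k‖ ^ 2)
      (fun k _ => by positivity) (Finset.mem_univ i)
  calc |M i j| ≤ ‖f v‖ := hcoord
    _ ≤ ‖f‖ * ‖v‖ := f.le_opNorm v
    _ = l2OpNorm M := by rw [hv, mul_one]; rfl

lemma l2OpNorm_pow_le {V : Type*} [Fintype V] [DecidableEq V] (M : Matrix V V ℝ) (n : ℕ) :
    l2OpNorm (M ^ n) ≤ (l2OpNorm M) ^ n := by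
  induction n with
  | zero =>
    simp only [pow_zero, l2OpNorm, map_one]
    exact ContinuousLinearMap.norm_id_le
  | succ n ih =>
    calc l2OpNorm (M ^ (n + 1)) = ‖Matrix.toEuclideanCLM (𝕜 := ℝ) (M ^ n * M)‖ := by
          rw [l2OpNorm, pow_succ]
      _ = ‖Matrix.toEuclideanCLM (𝕜 := ℝ) (M ^ n) * Matrix.toEuclideanCLM (𝕜 := ℝ) M‖ := by
          rw [map_mul]
      _ ≤ ‖Matrix.toEuclideanCLM (𝕜 := ℝ) (M ^ n)‖ * ‖Matrix.toEuclideanCLM (𝕜 := ℝ) M‖ :=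
          norm_mul_le _ _
      _ ≤ (l2OpNorm M) ^ n * l2OpNorm M := by
          exact mul_le_mul_of_nonneg_right ih (norm_nonneg _)
      _ = (l2OpNorm M) ^ (n + 1) := (pow_succ _ _).symm

lemma matrix_mul_loc {V : Type*} [Fintype V] (G : SimpleGraph V) (hconn : G.Connected)
    (r s : ℕ) (A B : Matrix V V ℝ)
    (hA : ∀ i j : V, r < G.dist i j → A i j = 0)
    (hB : ∀ i j : V, s < G.dist i j → B i j = 0) :
    ∀ i j : V, r + s < G.dist i j → (A * B) i j = 0 := by
  intro i j h
  rw [Matrix.mul_apply]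
  apply Finset.sum_eq_zero
  intro k _
  by_cases hk : r < G.dist i k
  · rw [hA i k hk, zero_mul]
  · push_neg at hk
    have htri := hconn.dist_triangle (u := i) (v := k) (w := j)
    have : s < G.dist k j := by omega
    rw [hB k j this, mul_zero]

lemma matrix_pow_loc {V : Type*} [Fintype V] [DecidableEq V] (G : SimpleGraph V)
    (hconn : G.Connected) (r : ℕ)
    (A : Matrix V V ℝ) (hA : ∀ i j : V, r < G.dist i j → A i j = 0) :
    ∀ n : ℕ, ∀ i j : V, n * r < G.dist i j → (A ^ n) i j = 0 := by
  intro n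
  induction n with
  | zero =>
    intro i j h
    simp only [Nat.zero_mul] at h
    have hne : i ≠ j := by
      intro he; rw [he, SimpleGraph.dist_self] at h; omega
    rw [pow_zero, Matrix.one_apply_ne hne]
  | succ n ih =>
    intro i j h
    rw [pow_succ]
    refine matrix_mul_loc G hconn (n * r) r _ _ ih hA i j ?_
    rw [add_mul, one_mul] at h
    omega

set_option maxHeartbeats 1000000 in
lemma key_bound {V : Type*} [Fintype V] [DecidableEq V] (A : Matrix V V ℝ) (i j : V)
    (t τ : ℝ) (b : ℕ)
    (hτ : Real.sqrt (l2OpNorm A) * |t| ≤ τ)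
    (hzero : ∀ n < b, (A ^ n) i j = 0) :
    |∑' n : ℕ, (-1:ℝ)^n * t^(2*n) * ((A^n) i j) / (Nat.factorial (2*n))| ≤
      τ ^ (2*b) * Real.cosh τ / (Nat.factorial (2*b)) := by
  set f : ℕ → ℝ := fun n => (-1:ℝ)^n * t^(2*n) * ((A^n) i j) / (Nat.factorial (2*n)) with hfdef
  have hτ0 : 0 ≤ τ := le_trans (by positivity) hτ
  have hlA : 0 ≤ l2OpNorm A := norm_nonneg _
  have hterm : ∀ n, |f n| ≤ τ ^ (2*n) / (Nat.factorial (2*n)) := by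
    intro n
    have hfac : (0:ℝ) < (Nat.factorial (2*n) : ℝ) := by
      exact_mod_cast Nat.factorial_pos _
    have h1 : |f n| = |t| ^ (2*n) * |(A^n) i j| / (Nat.factorial (2*n)) := by
      rw [hfdef]
      rw [abs_div, abs_mul, abs_mul, abs_pow, abs_pow, abs_neg, abs_one, one_pow, one_mul,
        abs_of_pos hfac]
    rw [h1]
    have h2 : |t| ^ (2*n) * |(A^n) i j| ≤ τ ^ (2*n) := by
      have h3 : |(A^n) i j| ≤ (l2OpNorm A) ^ n :=
        le_trans (entry_abs_le_l2OpNorm _ i j) (l2OpNorm_pow_le A n)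
      have h4 : |t| ^ (2*n) * |(A^n) i j| ≤ |t| ^ (2*n) * (l2OpNorm A) ^ n :=
        mul_le_mul_of_nonneg_left h3 (by positivity)
      have h5 : (Real.sqrt (l2OpNorm A) * |t|) ^ (2*n) = |t| ^ (2*n) * (l2OpNorm A) ^ n := by
        rw [mul_pow, pow_mul, Real.sq_sqrt hlA, mul_comm]
      calc |t| ^ (2*n) * |(A^n) i j| ≤ |t| ^ (2*n) * (l2OpNorm A) ^ n := h4
        _ = (Real.sqrt (l2OpNorm A) * |t|) ^ (2*n) := h5.symm
        _ ≤ τ ^ (2*n) := pow_le_pow_left₀ (by positivity) hτ _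
    gcongr
  have hg : Summable (fun n : ℕ => τ ^ (2*n) / (Nat.factorial (2*n) : ℝ)) :=
    (Real.hasSum_cosh τ).summable
  have habs : Summable (fun n => |f n|) :=
    Summable.of_nonneg_of_le (fun n => abs_nonneg _) hterm hg
  have hfsum : Summable f := by
    refine Summable.of_norm ?_
    simpa [Real.norm_eq_abs] using habs
  have hshift : Summable (fun m => |f (m + b)|) := (summable_nat_add_iff b).2 habs
  have hRHSsum : Summable (fun m : ℕ =>
      (τ ^ (2*b) / (Nat.factorial (2*b) : ℝ)) * (τ ^ (2*m) / (Nat.factorial (2*m) : ℝ))) :=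
    hg.mul_left _
  have hstep1 : |∑' n, f n| ≤ ∑' n, |f n| := by
    have h := norm_tsum_le_tsum_norm (f := f) (by simpa [Real.norm_eq_abs] using habs)
    simpa [Real.norm_eq_abs] using h
  have hsplit : ∑' n, |f n| = ∑' m, |f (m + b)| := by
    have h := Summable.sum_add_tsum_nat_add b habs
    have hz : ∑ n ∈ Finset.range b, |f n| = 0 := by
      apply Finset.sum_eq_zero
      intro n hn
      rw [hfdef]
      simp [hzero n (Finset.mem_range.mp hn)]
    rw [← h, hz, zero_add]
  have hstep2 : ∑' m, |f (m + b)| ≤ ∑' m : ℕ,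
      (τ ^ (2*b) / (Nat.factorial (2*b) : ℝ)) * (τ ^ (2*m) / (Nat.factorial (2*m) : ℝ)) := by
    refine Summable.tsum_le_tsum ?_ hshift hRHSsum
    intro m
    have h1 : |f (m + b)| ≤ τ ^ (2*(m+b)) / (Nat.factorial (2*(m+b))) := hterm (m + b)
    refine h1.trans ?_
    have hdvd : (Nat.factorial (2*b)) * (Nat.factorial (2*m)) ∣ Nat.factorial (2*(m+b)) := by
      have := Nat.factorial_mul_factorial_dvd_factorial_add (2*b) (2*m)
      have heq : 2*b + 2*m = 2*(m+b) := by ring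
      rwa [heq] at this
    have hle : ((Nat.factorial (2*b) : ℝ) * (Nat.factorial (2*m) : ℝ)) ≤
        (Nat.factorial (2*(m+b)) : ℝ) := by
      exact_mod_cast Nat.le_of_dvd (Nat.factorial_pos _) hdvd
    have hnum : τ ^ (2*(m+b)) = τ ^ (2*b) * τ ^ (2*m) := by
      rw [← pow_add]; ring_nf
    rw [hnum, div_mul_div_comm]
    apply div_le_div_of_nonneg_left (by positivity) (by positivity) hle
  have hstep3 : ∑' m : ℕ,
      (τ ^ (2*b) / (Nat.factorial (2*b) : ℝ)) * (τ ^ (2*m) / (Nat.factorial (2*m) : ℝ)) =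
      τ ^ (2*b) * Real.cosh τ / (Nat.factorial (2*b)) := by
    rw [tsum_mul_left, (Real.hasSum_cosh τ).tsum_eq]
    ring
  calc |∑' n, f n| ≤ ∑' n, |f n| := hstep1
    _ = ∑' m, |f (m + b)| := hsplit
    _ ≤ _ := hstep2
    _ = _ := hstep3

/-- **Lieb-Robinson bound for local couplings**, `xp` and `px` commutators:
both `|C^{xp}_{i,j}(t)|` and `|C^{px}_{i,j}(t)|` are bounded by
`τ^{2b} · cosh τ / (2b)!` with `b = ⌈dist(i,j)/(2R)⌉` and `τ = max{√‖PX‖, √‖XP‖}·|t|`. -/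
theorem lieb_robinson_local_xp_px {V : Type*} [Fintype V] [DecidableEq V]
    (G : SimpleGraph V) (hconn : G.Connected) (R : ℕ) (hR : 1 ≤ R)
    (X P : Matrix V V ℝ) (hX : X.IsSymm) (hP : P.IsSymm)
    (hXloc : ∀ i j : V, R < G.dist i j → X i j = 0)
    (hPloc : ∀ i j : V, R < G.dist i j → P i j = 0)
    (i j : V) (t : ℝ) :
    let τ : ℝ := max (Real.sqrt (l2OpNorm (P * X))) (Real.sqrt (l2OpNorm (X * P))) * |t|
    let b : ℕ := (⌈((G.dist i j : ℝ) / R) / 2⌉).toNat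
    |Cxp X P i j t| ≤ τ ^ (2 * b) * Real.cosh τ / (Nat.factorial (2 * b)) ∧
    |Cpx X P i j t| ≤ τ ^ (2 * b) * Real.cosh τ / (Nat.factorial (2 * b)) := by
  intro τ b
  have hb : b = (⌈((G.dist i j : ℝ) / R) / 2⌉).toNat := rfl
  have hRpos : (0:ℝ) < (R:ℝ) := by exact_mod_cast hR
  have hdistb : ∀ n < b, n * (2 * R) < G.dist i j := by
    intro n hn
    rw [hb] at hn
    have h1 : (n : ℤ) < ⌈((G.dist i j : ℝ) / R) / 2⌉ := Int.lt_toNat.mp hn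
    have h2 : ((n : ℤ) : ℝ) < ((G.dist i j : ℝ) / R) / 2 := Int.lt_ceil.mp h1
    rw [div_div] at h2
    have h3 : (n : ℝ) * ((R:ℝ) * 2) < (G.dist i j : ℝ) := by
      have h2' : (n : ℝ) < (G.dist i j : ℝ) / ((R:ℝ) * 2) := by exact_mod_cast h2
      exact (lt_div_iff₀ (by positivity)).mp h2'
    have h4 : ((n * (2 * R) : ℕ) : ℝ) < ((G.dist i j : ℕ) : ℝ) := by
      push_cast
      nlinarith
    exact_mod_cast h4
  have hPXloc : ∀ a c : V, 2 * R < G.dist a c → (P * X) a c = 0 := by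
    intro a c h
    exact matrix_mul_loc G hconn R R P X hPloc hXloc a c (by omega)
  have hXPloc : ∀ a c : V, 2 * R < G.dist a c → (X * P) a c = 0 := by
    intro a c h
    exact matrix_mul_loc G hconn R R X P hXloc hPloc a c (by omega)
  have hzeroPX : ∀ n < b, ((P * X) ^ n) i j = 0 := fun n hn =>
    matrix_pow_loc G hconn (2 * R) (P * X) hPXloc n i j (hdistb n hn)
  have hzeroXP : ∀ n < b, ((X * P) ^ n) i j = 0 := fun n hn =>
    matrix_pow_loc G hconn (2 * R) (X * P) hXPloc n i j (hdistb n hn)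
  have hτ1 : Real.sqrt (l2OpNorm (P * X)) * |t| ≤ τ :=
    mul_le_mul_of_nonneg_right (le_max_left _ _) (abs_nonneg t)
  have hτ2 : Real.sqrt (l2OpNorm (X * P)) * |t| ≤ τ :=
    mul_le_mul_of_nonneg_right (le_max_right _ _) (abs_nonneg t)
  constructor
  · rw [Cxp, abs_neg]
    exact key_bound (P * X) i j t τ b hτ1 hzeroPX
  · rw [Cpx]
    exact key_bound (X * P) i j t τ b hτ2 hzeroXP
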